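/- Let Hi denote the Scorer function Hi(z) = (1/π) ∫₀^∞ exp(zy − y³/3) dy and, for ν > 0 and x > 0, let A_{−ν}(x) = (1/π) ∫₀^∞ exp(νy − x · sinh y) dy denote the associated Anger–Weber function. Then for every fixed a ∈ ℝ, lim_{ν→∞} ν^{1/3} · A_{−ν}(ν + a·ν^{1/3}) = 2^{1/3} · Hi(−2^{1/3} · a), the limit being taken over real ν → +∞. -/

import Mathlib

open Real Filter MeasureTheory

/-- The Scorer function `Hi`, defined by the absolutely convergent integral
`Hi z = (1/π) ∫₀^∞ exp (z y - y³/3) dy`. -/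
noncomputable def scorerHi (z : ℝ) : ℝ :=
  (1 / π) * ∫ y in Set.Ioi (0:ℝ), Real.exp (z * y - y ^ 3 / 3)

/-- The associated Anger–Weber function `A_{-ν}(x) = (1/π) ∫₀^∞ exp (ν y - x sinh y) dy`. -/
noncomputable def angerWeberA (ν x : ℝ) : ℝ :=
  (1 / π) * ∫ y in Set.Ioi (0:ℝ), Real.exp (ν * y - x * Real.sinh y)


lemma nonneg_of_deriv {f f' : ℝ → ℝ} (hd : ∀ u, HasDerivAt f (f' u) u)
    (h0 : f 0 = 0) (h' : ∀ u, 0 ≤ u → 0 ≤ f' u) : ∀ u, 0 ≤ u → 0 ≤ f u := by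
  intro u hu
  have hdiff : Differentiable ℝ f := fun x => (hd x).differentiableAt
  have hmono : MonotoneOn f (Set.Ici (0:ℝ)) := by
    apply monotoneOn_of_deriv_nonneg (convex_Ici 0) hdiff.continuous.continuousOn
      (hdiff.differentiableOn)
    intro x hx
    rw [interior_Ici] at hx
    rw [(hd x).deriv]
    exact h' x (le_of_lt hx)
  calc (0:ℝ) = f 0 := h0.symm
    _ ≤ f u := hmono (by simp) (by simpa using hu) hu

lemma sinh_le_mul_cosh {u : ℝ} (hu : 0 ≤ u) : Real.sinh u ≤ u * Real.cosh u := by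
  have h := nonneg_of_deriv (f := fun u => u * Real.cosh u - Real.sinh u)
      (f' := fun u => u * Real.sinh u)
      (fun u => by
        have h := ((hasDerivAt_id u).mul (Real.hasDerivAt_cosh u)).sub (Real.hasDerivAt_sinh u)
        exact h.congr_deriv (by simp only [id_eq]; ring))
      (by simp)
      (fun u hu => mul_nonneg hu (Real.sinh_nonneg_iff.mpr hu))
      u hu
  have h2 : (0:ℝ) ≤ u * Real.cosh u - Real.sinh u := h
  linarith

lemma one_add_sq_le_cosh {u : ℝ} (hu : 0 ≤ u) : 1 + u ^ 2 / 2 ≤ Real.cosh u := by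
  have h := nonneg_of_deriv (f := fun u => Real.cosh u - 1 - u ^ 2 / 2)
      (f' := fun u => Real.sinh u - u)
      (fun u => by
        have h := ((Real.hasDerivAt_cosh u).sub (hasDerivAt_const u 1)).sub
          (((hasDerivAt_pow 2 u)).div_const 2)
        exact h.congr_deriv (by push_cast; ring))
      (by simp)
      (fun u hu => by
        have h3 : u ≤ Real.sinh u := Real.self_le_sinh_iff.mpr hu
        show (0:ℝ) ≤ Real.sinh u - u
        linarith)
      u hu
  have h2 : (0:ℝ) ≤ Real.cosh u - 1 - u ^ 2 / 2 := h
  linarith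

lemma cosh_le_aux {u : ℝ} (hu : 0 ≤ u) : Real.cosh u ≤ 1 + u ^ 2 / 2 * Real.cosh u := by
  have h := nonneg_of_deriv (f := fun u => 1 + u ^ 2 / 2 * Real.cosh u - Real.cosh u)
      (f' := fun u => (u * Real.cosh u - Real.sinh u) + u ^ 2 / 2 * Real.sinh u)
      (fun u => by
        have h := ((hasDerivAt_const u 1).add
          ((((hasDerivAt_pow 2 u)).div_const 2).mul (Real.hasDerivAt_cosh u))).sub
          (Real.hasDerivAt_cosh u)
        exact h.congr_deriv (by push_cast; ring))
      (by simp)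
      (fun u hu => by
        have h1 := sinh_le_mul_cosh hu
        have h2 := Real.sinh_nonneg_iff.mpr hu
        show (0:ℝ) ≤ (u * Real.cosh u - Real.sinh u) + u ^ 2 / 2 * Real.sinh u
        nlinarith)
      u hu
  have h2 : (0:ℝ) ≤ 1 + u ^ 2 / 2 * Real.cosh u - Real.cosh u := h
  linarith

lemma sinh_lower {u : ℝ} (hu : 0 ≤ u) : u + u ^ 3 / 6 ≤ Real.sinh u := by
  have h := nonneg_of_deriv (f := fun u => Real.sinh u - u - u ^ 3 / 6)
      (f' := fun u => Real.cosh u - 1 - u ^ 2 / 2)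
      (fun u => by
        have h := ((Real.hasDerivAt_sinh u).sub (hasDerivAt_id u)).sub
          ((hasDerivAt_pow 3 u).div_const 6)
        exact h.congr_deriv (by push_cast; ring))
      (by simp)
      (fun u hu => by
        have := one_add_sq_le_cosh hu
        show (0:ℝ) ≤ Real.cosh u - 1 - u ^ 2 / 2
        linarith)
      u hu
  have h2 : (0:ℝ) ≤ Real.sinh u - u - u ^ 3 / 6 := h
  linarith

lemma sinh_upper {u : ℝ} (hu : 0 ≤ u) : Real.sinh u ≤ u + u ^ 3 / 6 * Real.cosh u := by
  have h := nonneg_of_deriv (f := fun u => u + u ^ 3 / 6 * Real.cosh u - Real.sinh u)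
      (f' := fun u => (1 + u ^ 2 / 2 * Real.cosh u - Real.cosh u) + u ^ 3 / 6 * Real.sinh u)
      (fun u => by
        have h := ((hasDerivAt_id u).add
          (((hasDerivAt_pow 3 u).div_const 6).mul (Real.hasDerivAt_cosh u))).sub
          (Real.hasDerivAt_sinh u)
        exact h.congr_deriv (by push_cast; ring))
      (by simp)
      (fun u hu => by
        have h1 := cosh_le_aux hu
        have h2 := Real.sinh_nonneg_iff.mpr hu
        show (0:ℝ) ≤ (1 + u ^ 2 / 2 * Real.cosh u - Real.cosh u) + u ^ 3 / 6 * Real.sinh u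
        nlinarith [mul_nonneg (pow_nonneg hu 3) h2])
      u hu
  have h2 : (0:ℝ) ≤ u + u ^ 3 / 6 * Real.cosh u - Real.sinh u := h
  linarith

lemma rpow_facts {ν : ℝ} (hν : 0 < ν) :
    ν * ν ^ (-(1:ℝ)/3) = ν ^ ((2:ℝ)/3) ∧ (ν ^ (-(1:ℝ)/3)) ^ 3 = ν⁻¹ ∧
    ν ^ ((1:ℝ)/3) * ν ^ (-(1:ℝ)/3) = 1 ∧ ν ^ ((1:ℝ)/3) * ν⁻¹ = ν ^ (-(2:ℝ)/3) := by
  refine ⟨?_, ?_, ?_, ?_⟩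
  · nth_rewrite 1 [← Real.rpow_one ν]
    rw [← Real.rpow_add hν]; norm_num
  · rw [← Real.rpow_natCast (ν ^ (-(1:ℝ)/3)) 3, ← Real.rpow_mul hν.le]
    norm_num [Real.rpow_neg_one]
  · rw [← Real.rpow_add hν]; norm_num
  · rw [← Real.rpow_neg_one ν, ← Real.rpow_add hν]; norm_num

lemma pointwise_limit (a t : ℝ) (ht : 0 ≤ t) :
    Tendsto (fun ν : ℝ => Real.exp (ν ^ ((2:ℝ)/3) * t
        - (ν + a * ν ^ ((1:ℝ)/3)) * Real.sinh (ν ^ (-(1:ℝ)/3) * t)))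
      atTop (nhds (Real.exp (-(t ^ 3 / 6) - a * t))) := by
  have hc0 : Tendsto (fun ν : ℝ => ν ^ (-(1:ℝ)/3)) atTop (nhds 0) := by
    have := tendsto_rpow_neg_atTop (show (0:ℝ) < 1/3 by norm_num)
    simpa [neg_div] using this
  have hQ0 : Tendsto (fun ν : ℝ => ν ^ (-(2:ℝ)/3)) atTop (nhds 0) := by
    have := tendsto_rpow_neg_atTop (show (0:ℝ) < 2/3 by norm_num)
    simpa [neg_div] using this
  have hcosh : Tendsto (fun ν : ℝ => Real.cosh (ν ^ (-(1:ℝ)/3) * t)) atTop (nhds 1) := by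
    have h1 : Tendsto (fun ν : ℝ => ν ^ (-(1:ℝ)/3) * t) atTop (nhds 0) := by
      simpa using hc0.mul_const t
    have := (Real.continuous_cosh.tendsto 0).comp h1
    simpa [Function.comp_def] using this
  have hS1 : Tendsto (fun ν : ℝ => ν * Real.sinh (ν ^ (-(1:ℝ)/3) * t) - ν ^ ((2:ℝ)/3) * t)
      atTop (nhds (t ^ 3 / 6)) := by
    apply tendsto_of_tendsto_of_tendsto_of_le_of_le'
      (g := fun _ : ℝ => t ^ 3 / 6)
      (h := fun ν : ℝ => t ^ 3 / 6 * Real.cosh (ν ^ (-(1:ℝ)/3) * t))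
      tendsto_const_nhds (by simpa using hcosh.const_mul (t ^ 3 / 6))
    · filter_upwards [eventually_gt_atTop (0:ℝ)] with ν hν
      obtain ⟨hA, hB, hC, hD⟩ := rpow_facts hν
      have hcpos : 0 < ν ^ (-(1:ℝ)/3) := Real.rpow_pos_of_pos hν _
      have hu0 : 0 ≤ ν ^ (-(1:ℝ)/3) * t := mul_nonneg hcpos.le ht
      have hs := sinh_lower hu0
      have e1 : ν * (ν ^ (-(1:ℝ)/3) * t) = ν ^ ((2:ℝ)/3) * t := by
        rw [← mul_assoc, hA]
      have e2 : ν * (ν ^ (-(1:ℝ)/3) * t) ^ 3 = t ^ 3 := by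
        rw [mul_pow, ← mul_assoc, hB, mul_inv_cancel₀ hν.ne', one_mul]
      nlinarith [mul_le_mul_of_nonneg_left hs hν.le]
    · filter_upwards [eventually_gt_atTop (0:ℝ)] with ν hν
      obtain ⟨hA, hB, hC, hD⟩ := rpow_facts hν
      have hcpos : 0 < ν ^ (-(1:ℝ)/3) := Real.rpow_pos_of_pos hν _
      have hu0 : 0 ≤ ν ^ (-(1:ℝ)/3) * t := mul_nonneg hcpos.le ht
      have hs := sinh_upper hu0
      have e1 : ν * (ν ^ (-(1:ℝ)/3) * t) = ν ^ ((2:ℝ)/3) * t := by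
        rw [← mul_assoc, hA]
      have e2 : ν * (ν ^ (-(1:ℝ)/3) * t) ^ 3 = t ^ 3 := by
        rw [mul_pow, ← mul_assoc, hB, mul_inv_cancel₀ hν.ne', one_mul]
      have h := mul_le_mul_of_nonneg_left hs hν.le
      have hexp : ν * (ν ^ (-(1:ℝ)/3) * t + (ν ^ (-(1:ℝ)/3) * t) ^ 3 / 6
          * Real.cosh (ν ^ (-(1:ℝ)/3) * t))
          = ν ^ ((2:ℝ)/3) * t + t ^ 3 / 6 * Real.cosh (ν ^ (-(1:ℝ)/3) * t) := by
        linear_combination e1 + Real.cosh (ν ^ (-(1:ℝ)/3) * t) * e2 / 6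
      linarith
  have hS2 : Tendsto (fun ν : ℝ => ν ^ ((1:ℝ)/3) * Real.sinh (ν ^ (-(1:ℝ)/3) * t))
      atTop (nhds t) := by
    apply tendsto_of_tendsto_of_tendsto_of_le_of_le'
      (g := fun _ : ℝ => t)
      (h := fun ν : ℝ => t + ν ^ (-(2:ℝ)/3) * (t ^ 3 / 6 * Real.cosh (ν ^ (-(1:ℝ)/3) * t)))
      tendsto_const_nhds
      (by simpa using tendsto_const_nhds.add (hQ0.mul (hcosh.const_mul (t ^ 3 / 6))))
    · filter_upwards [eventually_gt_atTop (0:ℝ)] with ν hν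
      obtain ⟨hA, hB, hC, hD⟩ := rpow_facts hν
      have hcpos : 0 < ν ^ (-(1:ℝ)/3) := Real.rpow_pos_of_pos hν _
      have hu0 : 0 ≤ ν ^ (-(1:ℝ)/3) * t := mul_nonneg hcpos.le ht
      have hs := sinh_lower hu0
      have hp13 : 0 < ν ^ ((1:ℝ)/3) := Real.rpow_pos_of_pos hν _
      have e3 : ν ^ ((1:ℝ)/3) * (ν ^ (-(1:ℝ)/3) * t) = t := by
        rw [← mul_assoc, hC, one_mul]
      nlinarith [mul_le_mul_of_nonneg_left hs hp13.le,
        mul_nonneg hp13.le (pow_nonneg hu0 3)]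
    · filter_upwards [eventually_gt_atTop (0:ℝ)] with ν hν
      obtain ⟨hA, hB, hC, hD⟩ := rpow_facts hν
      have hcpos : 0 < ν ^ (-(1:ℝ)/3) := Real.rpow_pos_of_pos hν _
      have hu0 : 0 ≤ ν ^ (-(1:ℝ)/3) * t := mul_nonneg hcpos.le ht
      have hs := sinh_upper hu0
      have hp13 : 0 < ν ^ ((1:ℝ)/3) := Real.rpow_pos_of_pos hν _
      have e3 : ν ^ ((1:ℝ)/3) * (ν ^ (-(1:ℝ)/3) * t) = t := by
        rw [← mul_assoc, hC, one_mul]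
      have e4 : ν ^ ((1:ℝ)/3) * (ν ^ (-(1:ℝ)/3) * t) ^ 3 = ν ^ (-(2:ℝ)/3) * t ^ 3 := by
        rw [mul_pow, ← mul_assoc, hB, hD]
      have h := mul_le_mul_of_nonneg_left hs hp13.le
      have hexp : ν ^ ((1:ℝ)/3) * (ν ^ (-(1:ℝ)/3) * t + (ν ^ (-(1:ℝ)/3) * t) ^ 3 / 6
          * Real.cosh (ν ^ (-(1:ℝ)/3) * t))
          = t + ν ^ (-(2:ℝ)/3) * (t ^ 3 / 6 * Real.cosh (ν ^ (-(1:ℝ)/3) * t)) := by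
        linear_combination e3 + Real.cosh (ν ^ (-(1:ℝ)/3) * t) * e4 / 6
      linarith
  have hE : Tendsto (fun ν : ℝ => ν ^ ((2:ℝ)/3) * t
      - (ν + a * ν ^ ((1:ℝ)/3)) * Real.sinh (ν ^ (-(1:ℝ)/3) * t))
      atTop (nhds (-(t ^ 3 / 6) - a * t)) := by
    have := (hS1.neg).sub (hS2.const_mul a)
    apply this.congr
    intro ν; ring
  exact (Real.continuous_exp.tendsto _).comp hE

lemma exponent_bound (a ν t : ℝ) (hν : 0 < ν) (hν2 : 2 * |a| ≤ ν ^ ((2:ℝ)/3))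
    (ht : 0 ≤ t) :
    ν ^ ((2:ℝ)/3) * t - (ν + a * ν ^ ((1:ℝ)/3)) * Real.sinh (ν ^ (-(1:ℝ)/3) * t)
      ≤ |a| * t - t ^ 3 / 12 := by
  set c := ν ^ (-(1:ℝ)/3) with hc
  have hcpos : 0 < c := Real.rpow_pos_of_pos hν _
  have hA : ν * c = ν ^ ((2:ℝ)/3) := by
    rw [hc]; nth_rewrite 1 [← Real.rpow_one ν]
    rw [← Real.rpow_add hν]; norm_num
  have hB : c ^ 3 = ν⁻¹ := by
    rw [hc, ← Real.rpow_natCast (ν ^ (-(1:ℝ)/3)) 3, ← Real.rpow_mul hν.le]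
    norm_num [Real.rpow_neg_one]
  have hC : ν ^ ((1:ℝ)/3) * c = 1 := by
    rw [hc, ← Real.rpow_add hν]; norm_num
  have hD : ν ^ ((1:ℝ)/3) * ν⁻¹ = ν ^ (-(2:ℝ)/3) := by
    rw [← Real.rpow_neg_one ν, ← Real.rpow_add hν]; norm_num
  have hE : ν ^ ((2:ℝ)/3) * ν ^ (-(2:ℝ)/3) = 1 := by
    rw [← Real.rpow_add hν]; norm_num
  set u := c * t with hu
  have hu0 : 0 ≤ u := mul_nonneg hcpos.le ht
  have hs := sinh_lower hu0
  -- x = ν + a ν^{1/3} ≥ 0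
  have hp13 : 0 < ν ^ ((1:ℝ)/3) := Real.rpow_pos_of_pos hν _
  have hx : 0 ≤ ν + a * ν ^ ((1:ℝ)/3) := by
    have h1 : ν = ν ^ ((1:ℝ)/3) * ν ^ ((2:ℝ)/3) := by
      rw [← Real.rpow_add hν]; norm_num
    have h2 : -|a| ≤ a := neg_abs_le a
    have h3 : 0 ≤ ν ^ ((1:ℝ)/3) * (ν ^ ((2:ℝ)/3) + a) := by
      apply mul_nonneg hp13.le
      nlinarith [abs_nonneg a]
    nlinarith
  have key : (ν + a * ν ^ ((1:ℝ)/3)) * (u + u ^ 3 / 6) ≤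
      (ν + a * ν ^ ((1:ℝ)/3)) * Real.sinh u := by
    exact mul_le_mul_of_nonneg_left hs hx
  -- expand LHS
  have hexp : (ν + a * ν ^ ((1:ℝ)/3)) * (u + u ^ 3 / 6)
      = ν ^ ((2:ℝ)/3) * t + t ^ 3 / 6 + a * t + a * (ν ^ (-(2:ℝ)/3)) * t ^ 3 / 6 := by
    have e1 : ν * u = ν ^ ((2:ℝ)/3) * t := by rw [hu, ← mul_assoc, hA]
    have e2 : ν * u ^ 3 = t ^ 3 := by
      rw [hu, mul_pow, ← mul_assoc, hB, mul_inv_cancel₀ hν.ne', one_mul]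
    have e3 : ν ^ ((1:ℝ)/3) * u = t := by rw [hu, ← mul_assoc, hC, one_mul]
    have e4 : ν ^ ((1:ℝ)/3) * u ^ 3 = ν ^ (-(2:ℝ)/3) * t ^ 3 := by
      rw [hu, mul_pow, ← mul_assoc, hB, hD]
    linear_combination e1 + e2 / 6 + a * e3 + a * e4 / 6
  have hQ : 0 < ν ^ (-(2:ℝ)/3) := Real.rpow_pos_of_pos hν _
  have habsQ : |a| * ν ^ (-(2:ℝ)/3) ≤ 1/2 := by
    nlinarith
  have key2 : ν ^ ((2:ℝ)/3) * t + t ^ 3 / 6 + a * t + a * (ν ^ (-(2:ℝ)/3)) * t ^ 3 / 6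
      ≤ (ν + a * ν ^ ((1:ℝ)/3)) * Real.sinh u := hexp ▸ key
  have hneg : -(a * ν ^ (-(2:ℝ)/3)) ≤ 1/2 := by
    refine le_trans (neg_le_abs _) ?_
    rw [abs_mul, abs_of_pos hQ]; exact habsQ
  have h5 : -(a * ν ^ (-(2:ℝ)/3)) * t ^ 3 ≤ (1/2) * t ^ 3 :=
    mul_le_mul_of_nonneg_right hneg (pow_nonneg ht 3)
  have h6 : -a * t ≤ |a| * t :=
    mul_le_mul_of_nonneg_right (by linarith [neg_abs_le a]) ht
  linarith

lemma bound_integrable (a : ℝ) :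
    IntegrableOn (fun t : ℝ => Real.exp (|a| * t - t ^ 3 / 12)) (Set.Ioi 0) := by
  set b := |a| + 1 with hb
  have hb1 : 1 ≤ b := by simp [hb, abs_nonneg]
  set K := b * Real.sqrt (12 * b) with hK
  have hK0 : 0 ≤ K := mul_nonneg (by linarith) (Real.sqrt_nonneg _)
  have hmaj : ∀ t ∈ Set.Ioi (0:ℝ),
      ‖Real.exp (|a| * t - t ^ 3 / 12)‖ ≤ Real.exp K * Real.exp (-1 * t) := by
    intro t ht
    have ht0 : (0:ℝ) ≤ t := (le_of_lt ht)
    rw [Real.norm_eq_abs, Real.abs_exp, ← Real.exp_add]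
    apply Real.exp_le_exp.mpr
    rcases le_or_gt (12 * b) (t ^ 2) with h | h
    · have : b * t ≤ t ^ 3 / 12 := by nlinarith
      have : |a| * t ≤ b * t - t := by nlinarith
      linarith
    · have ht2 : t ≤ Real.sqrt (12 * b) := by
        rw [← Real.sqrt_sq ht0]
        exact Real.sqrt_le_sqrt h.le
      have h1 : b * t ≤ K := by
        rw [hK]; nlinarith
      have h2 : 0 ≤ t ^ 3 / 12 := by positivity
      have : |a| * t ≤ b * t - t := by nlinarith
      linarith
  apply Integrable.mono' ((exp_neg_integrableOn_Ioi 0 (by norm_num : (0:ℝ) < 1)).const_mul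
    (Real.exp K))
  · apply Continuous.aestronglyMeasurable
    fun_prop
  · exact (ae_restrict_iff' measurableSet_Ioi).mpr (ae_of_all _ hmaj)


lemma scorer_const (a : ℝ) :
    (2:ℝ) ^ ((1:ℝ)/3) * scorerHi (-((2:ℝ) ^ ((1:ℝ)/3)) * a)
      = (1 / π) * ∫ t in Set.Ioi (0:ℝ), Real.exp (-(t ^ 3 / 6) - a * t) := by
  have h2 : (0:ℝ) < 2 := by norm_num
  have hbpos : (0:ℝ) < (2:ℝ) ^ (-(1:ℝ)/3) := Real.rpow_pos_of_pos h2 _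
  have key := integral_comp_mul_left_Ioi
    (fun y => Real.exp (-((2:ℝ) ^ ((1:ℝ)/3)) * a * y - y ^ 3 / 3)) 0 hbpos
  have hinv : ((2:ℝ) ^ (-(1:ℝ)/3))⁻¹ = (2:ℝ) ^ ((1:ℝ)/3) := by
    rw [← Real.rpow_neg h2.le]; norm_num
  have hcube : ((2:ℝ) ^ (-(1:ℝ)/3)) ^ 3 = 2⁻¹ := by
    rw [← Real.rpow_natCast ((2:ℝ) ^ (-(1:ℝ)/3)) 3, ← Real.rpow_mul h2.le]
    norm_num [Real.rpow_neg_one]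
  have hmul : (2:ℝ) ^ ((1:ℝ)/3) * (2:ℝ) ^ (-(1:ℝ)/3) = 1 := by
    rw [← Real.rpow_add h2]; norm_num
  have heq : ∀ t : ℝ, Real.exp (-((2:ℝ) ^ ((1:ℝ)/3)) * a * ((2:ℝ) ^ (-(1:ℝ)/3) * t)
      - ((2:ℝ) ^ (-(1:ℝ)/3) * t) ^ 3 / 3) = Real.exp (-(t ^ 3 / 6) - a * t) := by
    intro t
    congr 1
    rw [mul_pow, hcube]
    linear_combination (-(a * t)) * hmul
  rw [mul_zero] at key
  simp only [heq] at key
  rw [scorerHi]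
  rw [smul_eq_mul, hinv] at key
  rw [key]
  ring

/-- For every fixed `a : ℝ`,
`ν^(1/3) * A_{-ν}(ν + a ν^(1/3)) → 2^(1/3) Hi (-2^(1/3) a)` as real `ν → +∞`. -/
theorem angerWeber_scorer_limit (a : ℝ) :
    Tendsto (fun ν : ℝ =>
        ν ^ ((1:ℝ)/3) * angerWeberA ν (ν + a * ν ^ ((1:ℝ)/3)))
      atTop (nhds ((2:ℝ) ^ ((1:ℝ)/3) * scorerHi (-((2:ℝ) ^ ((1:ℝ)/3)) * a))) := by
  have h23 : Tendsto (fun ν : ℝ => ν ^ ((2:ℝ)/3)) atTop atTop :=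
    tendsto_rpow_atTop (by norm_num)
  have hDCT : Tendsto (fun ν : ℝ => ∫ t in Set.Ioi (0:ℝ),
      Real.exp (ν ^ ((2:ℝ)/3) * t
        - (ν + a * ν ^ ((1:ℝ)/3)) * Real.sinh (ν ^ (-(1:ℝ)/3) * t)))
      atTop (nhds (∫ t in Set.Ioi (0:ℝ), Real.exp (-(t ^ 3 / 6) - a * t))) := by
    apply tendsto_integral_filter_of_dominated_convergence
      (fun t : ℝ => Real.exp (|a| * t - t ^ 3 / 12))
    · filter_upwards with ν
      apply Continuous.aestronglyMeasurable
      fun_prop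
    · filter_upwards [eventually_gt_atTop (0:ℝ), h23.eventually_ge_atTop (2 * |a|)]
        with ν hν hν2
      rw [ae_restrict_iff' measurableSet_Ioi]
      filter_upwards with t ht
      rw [Real.norm_eq_abs, Real.abs_exp]
      exact Real.exp_le_exp.mpr (exponent_bound a ν t hν hν2 (le_of_lt ht))
    · exact bound_integrable a
    · rw [ae_restrict_iff' measurableSet_Ioi]
      filter_upwards with t ht
      exact pointwise_limit a t (le_of_lt ht)
  have hfinal := hDCT.const_mul (1 / π)
  rw [scorer_const a]
  apply hfinal.congr'
  filter_upwards [eventually_gt_atTop (0:ℝ)] with ν hν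
  have hcpos : 0 < ν ^ (-(1:ℝ)/3) := Real.rpow_pos_of_pos hν _
  have hA : ν * ν ^ (-(1:ℝ)/3) = ν ^ ((2:ℝ)/3) := by
    nth_rewrite 1 [← Real.rpow_one ν]
    rw [← Real.rpow_add hν]; norm_num
  have hinv : (ν ^ (-(1:ℝ)/3))⁻¹ = ν ^ ((1:ℝ)/3) := by
    rw [← Real.rpow_neg hν.le]; norm_num
  have key := integral_comp_mul_left_Ioi
    (fun y => Real.exp (ν * y - (ν + a * ν ^ ((1:ℝ)/3)) * Real.sinh y)) 0 hcpos
  have heq : ∀ t : ℝ, Real.exp (ν * (ν ^ (-(1:ℝ)/3) * t)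
      - (ν + a * ν ^ ((1:ℝ)/3)) * Real.sinh (ν ^ (-(1:ℝ)/3) * t))
      = Real.exp (ν ^ ((2:ℝ)/3) * t
      - (ν + a * ν ^ ((1:ℝ)/3)) * Real.sinh (ν ^ (-(1:ℝ)/3) * t)) := by
    intro t; congr 2
    rw [← mul_assoc, hA]
  rw [mul_zero] at key
  simp only [heq, smul_eq_mul, hinv] at key
  rw [angerWeberA, key]
  ring
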